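/- Let E be a locally solid vector lattice. If (T_α) and (S_α) are nets of linear operators on E (over the same directed index set) each converging to 0 order-uniformly on every topologically bounded subset of E, then the net of compositions (T_α ∘ S_α) converges to 0 order-uniformly on every topologically bounded subset of E. -/

import Mathlib

open Filter Topology Pointwise

/-- A set `B` is topologically bounded: for every neighborhood `V` of `0` there is `γ > 0`
with `B ⊆ γ • V`. -/
def IsTopBounded {E : Type*} [SMul ℝ E] [TopologicalSpace E] [Zero E] (B : Set E) : Prop :=
  ∀ V ∈ nhds (0 : E), ∃ γ : ℝ, 0 < γ ∧ B ⊆ γ • V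

/-- In a locally solid vector lattice `E`, if the nets `(T α)` and `(S α)` of
linear operators each converge to `0` order-uniformly on every topologically bounded subset of
`E`, then the net of compositions `(T α ∘ S α)` converges to `0` order-uniformly on every
topologically bounded subset of `E`. -/
theorem comp_orderUnifConv_on_bounded
    {E : Type*} [AddCommGroup E] [Lattice E] [Module ℝ E]
    [CovariantClass E E (· + ·) (· ≤ ·)] [PosSMulMono ℝ E]
    [TopologicalSpace E] [IsTopologicalAddGroup E] [ContinuousSMul ℝ E]
    (hsolid : ∀ W ∈ 𝓝 (0 : E), ∃ W' ∈ 𝓝 (0 : E), W' ⊆ W ∧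
      ∀ x y : E, y ∈ W' → |x| ≤ |y| → x ∈ W')
    {ι : Type*} [Nonempty ι] [SemilatticeSup ι]
    (T S : ι → E →ₗ[ℝ] E)
    (hT : ∀ B : Set E, IsTopBounded B →
      ∀ a : E, 0 ≤ a → ∃ α₀ : ι, ∀ α ≥ α₀, ∀ x ∈ B, |T α x| ≤ a)
    (hS : ∀ B : Set E, IsTopBounded B →
      ∀ a : E, 0 ≤ a → ∃ α₀ : ι, ∀ α ≥ α₀, ∀ x ∈ B, |S α x| ≤ a) :
    ∀ B : Set E, IsTopBounded B →
      ∀ a : E, 0 ≤ a → ∃ α₀ : ι, ∀ α ≥ α₀, ∀ x ∈ B, |T α (S α x)| ≤ a := by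
  intro B hB a ha
  -- The order interval A = {y | |y| ≤ a} is topologically bounded.
  have hA : IsTopBounded {y : E | |y| ≤ a} := by
    intro V hV
    obtain ⟨W', hW', hWV, hWsolid⟩ := hsolid V hV
    -- absorbency: find δ > 0 with δ • a ∈ W'
    have hcont : Filter.Tendsto (fun t : ℝ => t • a) (𝓝 0) (𝓝 (0 : E)) := by
      have := (continuous_id.smul continuous_const : Continuous fun t : ℝ => t • a)
      have h : Filter.Tendsto (fun t : ℝ => t • a) (𝓝 0) (𝓝 ((0 : ℝ) • a)) := this.tendsto 0
      rwa [zero_smul] at h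
    obtain ⟨δ, hδpos, hδ⟩ : ∃ δ : ℝ, 0 < δ ∧ δ • a ∈ W' := by
      have := hcont hW'
      rw [Filter.mem_map, Metric.mem_nhds_iff] at this
      obtain ⟨ε, hε, hεsub⟩ := this
      exact ⟨ε/2, by positivity, hεsub (by simp [abs_of_pos, hε, half_lt_self, (half_pos hε).le,
        Real.dist_eq, abs_of_nonneg (half_pos hε).le])⟩
    refine ⟨δ⁻¹, by positivity, fun x hx => ?_⟩
    have hxW : δ • x ∈ W' := by
      apply hWsolid _ _ hδ
      have h1 : |x| ≤ a := hx
      have h2 : x ≤ a ∧ -x ≤ a := abs_le'.mp h1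
      have h3 : δ • x ≤ δ • a := smul_le_smul_of_nonneg_left h2.1 hδpos.le
      have h4 : -(δ • x) ≤ δ • a := by
        have := smul_le_smul_of_nonneg_left h2.2 hδpos.le
        simpa [smul_neg] using this
      have h5 : |δ • x| ≤ δ • a := abs_le'.mpr ⟨h3, h4⟩
      have h6 : (0:E) ≤ δ • a := smul_nonneg hδpos.le ha
      rwa [abs_of_nonneg h6]
    have : x = δ⁻¹ • (δ • x) := by
      rw [smul_smul, inv_mul_cancel₀ hδpos.ne', one_smul]
    rw [this]
    exact Set.smul_mem_smul_set (hWV hxW)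
  obtain ⟨α₁, hα₁⟩ := hT _ hA a ha
  obtain ⟨α₂, hα₂⟩ := hS B hB a ha
  refine ⟨α₁ ⊔ α₂, fun α hα x hx => ?_⟩
  exact hα₁ α (le_trans le_sup_left hα) _ (hα₂ α (le_trans le_sup_right hα) x hx)
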